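/- For every ζ ∈ Ū with ζ ≠ 0, the unique continuous solution b(·,ζ) of the Jost integral equation at ζ satisfies |b(a,ζ) − 1| ≤ (‖V‖₁/|ζ|)·exp((b − a)·‖V‖₁). In particular b(a,ζ) → 1 as |ζ| → ∞ with ζ ∈ Ū. -/

import Mathlib

open MeasureTheory intervalIntegral Filter

/-- The kernel `κ_ζ(s) = (e^{2iζs} − 1)/(2iζ)` for `ζ ≠ 0`, and `κ₀(s) = s`. -/
noncomputable def kappa (ζ : ℂ) (s : ℝ) : ℂ :=
  if ζ = 0 then (s : ℂ)
  else (Complex.exp (2 * Complex.I * ζ * s) - 1) / (2 * Complex.I * ζ)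

/-- a.e. fundamental theorem of calculus for nonnegative integrable functions. -/
lemma ae_hasDerivAt_primitive {g : ℝ → ℝ} (hgm : Measurable g) (hgi : Integrable g)
    (hg0 : ∀ t, 0 ≤ g t) :
    ∀ᵐ t, HasDerivAt (fun u => ∫ s in (0:ℝ)..u, g s) (g t) t := by
  set G : ℝ → ℝ := fun u => ∫ s in (0:ℝ)..u, g s with hG
  have hint : ∀ c d : ℝ, IntervalIntegrable g volume c d := fun c d => hgi.intervalIntegrable
  have hdiff : ∀ u v : ℝ, G v - G u = ∫ s in u..v, g s := by
    intro u v
    rw [hG]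
    simp only
    rw [← intervalIntegral.integral_add_adjacent_intervals (hint 0 u) (hint u v)]
    ring
  have hmono : Monotone G := by
    intro u v huv
    have h1 := hdiff u v
    have h2 : 0 ≤ ∫ s in u..v, g s :=
      intervalIntegral.integral_nonneg huv (fun t _ => hg0 t)
    linarith
  have hcont : Continuous G := intervalIntegral.continuous_primitive hint 0
  have hstieq : ∀ u, hmono.stieltjesFunction u = G u := by
    intro u
    rw [hmono.stieltjesFunction_eq]
    exact rightLim_eq_of_tendsto
      ((hcont.tendsto u).mono_left nhdsWithin_le_nhds)
  have hmeas_eq : hmono.stieltjesFunction.measure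
      = volume.withDensity (fun t => ENNReal.ofReal (g t)) := by
    refine MeasureTheory.Measure.ext_of_Ioc _ _ (fun c d hcd => ?_)
    rw [StieltjesFunction.measure_Ioc, hstieq, hstieq, hdiff,
      intervalIntegral.integral_of_le hcd.le,
      withDensity_apply _ measurableSet_Ioc,
      ← ofReal_integral_eq_lintegral_ofReal (hgi.restrict) (ae_of_all _ hg0)]
  have hrn : (hmono.stieltjesFunction.measure).rnDeriv volume
      =ᶠ[ae volume] fun t => ENNReal.ofReal (g t) := by
    rw [hmeas_eq]
    exact Measure.rnDeriv_withDensity volume (hgm.ennreal_ofReal)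
  filter_upwards [hmono.ae_hasDerivAt, hrn] with t ht h2
  rw [h2, ENNReal.toReal_ofReal (hg0 t)] at ht
  exact ht

/-- Key inequality: `∫_x^b g W^k ≤ W(x)^{k+1}/(k+1)` where `W t = ∫_t^b g`. -/
lemma integral_mul_pow_le {g : ℝ → ℝ} {b : ℝ} (hgm : Measurable g) (hgi : Integrable g)
    (hg0 : ∀ t, 0 ≤ g t) (hsupp : ∀ t, b < t → g t = 0) (k : ℕ) {x : ℝ} (hx : x ≤ b) :
    ∫ t in x..b, g t * (∫ s in t..b, g s) ^ k
      ≤ (∫ s in x..b, g s) ^ (k + 1) / (k + 1) := by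
  set G : ℝ → ℝ := fun u => ∫ s in (0:ℝ)..u, g s with hG
  have hint : ∀ c d : ℝ, IntervalIntegrable g volume c d := fun c d => hgi.intervalIntegrable
  set W : ℝ → ℝ := fun t => ∫ s in t..b, g s with hW
  have hWG : ∀ t, W t = G b - G t := by
    intro t
    rw [hW, hG]
    simp only
    rw [← intervalIntegral.integral_add_adjacent_intervals (hint 0 t) (hint t b)]
    ring
  have hWcont : Continuous W := by
    have hcont : Continuous G := intervalIntegral.continuous_primitive hint 0
    simp only [funext hWG]
    exact continuous_const.sub hcont
  have hWanti : Antitone W := by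
    intro u v huv
    have h1 : W u - W v = ∫ s in u..v, g s := by
      rw [hW]
      simp only
      rw [← intervalIntegral.integral_add_adjacent_intervals (hint u v) (hint v b)]
      ring
    have h2 : 0 ≤ ∫ s in u..v, g s :=
      intervalIntegral.integral_nonneg huv (fun t _ => hg0 t)
    linarith
  have hWb : W b = 0 := by
    rw [hW]; simp
  have hW0 : ∀ t, 0 ≤ W t := by
    intro t
    rcases le_total t b with h | h
    · exact intervalIntegral.integral_nonneg h (fun s _ => hg0 s)
    · have h1 : W b - W t = ∫ s in b..t, g s := by
        rw [hW]; simp only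
        rw [← intervalIntegral.integral_add_adjacent_intervals (hint b t) (hint t b)]
        simp
      have h2 : (∫ s in b..t, g s) = 0 := by
        rw [intervalIntegral.integral_of_le h]
        apply MeasureTheory.setIntegral_eq_zero_of_forall_eq_zero
        intro s hs
        exact hsupp s hs.1
      -- so W t = W b = 0
      rw [hWb] at h1
      linarith
  have hWd : ∀ᵐ t, HasDerivAt W (-(g t)) t := by
    filter_upwards [ae_hasDerivAt_primitive hgm hgi hg0] with t ht
    have : HasDerivAt (fun u => G b - G u) (0 - g t) t := (hasDerivAt_const _ _).sub ht
    simpa [funext hWG] using this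
  -- the monotone auxiliary function
  set F : ℝ → ℝ := fun t => -(W t ^ (k + 1)) / (k + 1) with hF
  have hk1 : (0:ℝ) < (k:ℝ) + 1 := by positivity
  have hFmono : Monotone F := by
    intro u v huv
    have h1 : W v ^ (k+1) ≤ W u ^ (k+1) := pow_le_pow_left₀ (hW0 v) (hWanti huv) _
    rw [hF]
    simp only
    rw [div_le_div_iff₀ hk1 hk1]
    nlinarith
  have hFcont : Continuous F := by
    apply Continuous.div_const
    exact (hWcont.pow _).neg
  have hFstieq : ∀ u, hFmono.stieltjesFunction u = F u := by
    intro u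
    rw [hFmono.stieltjesFunction_eq]
    exact rightLim_eq_of_tendsto
      ((hFcont.tendsto u).mono_left nhdsWithin_le_nhds)
  have hFd : ∀ᵐ t, HasDerivAt F (g t * W t ^ k) t := by
    filter_upwards [hWd] with t ht
    have h1 : HasDerivAt (fun u => -(W u ^ (k+1)) / (k+1))
        (-(((k:ℝ)+1) * W t ^ k * (-(g t))) / (k+1)) t := by
      have := (ht.pow (k+1)).neg.div_const ((k:ℝ)+1)
      refine this.congr_deriv ?_
      rw [Nat.add_sub_cancel]
      push_cast
      ring
    have h2 : -(((k:ℝ)+1) * W t ^ k * (-(g t))) / (k+1) = g t * W t ^ k := by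
      field_simp
    rw [h2] at h1
    exact h1
  -- identify rnDeriv with the derivative a.e.
  have hrn : ∀ᵐ t, ((hFmono.stieltjesFunction.measure).rnDeriv volume t).toReal
      = g t * W t ^ k := by
    filter_upwards [hFmono.ae_hasDerivAt, hFd] with t h1 h2
    exact HasDerivAt.unique h1 h2
  set μF := hFmono.stieltjesFunction.measure with hμF
  have key : ∫ t in Set.Ioc x b, g t * W t ^ k = (∫⁻ t in Set.Ioc x b, μF.rnDeriv volume t).toReal := by
    rw [← MeasureTheory.integral_toReal (μF.measurable_rnDeriv volume).aemeasurable
      (ae_restrict_of_ae (Measure.rnDeriv_lt_top μF volume))]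
    exact integral_congr_ae (ae_restrict_of_ae (hrn.mono fun t ht => ht.symm))
  have hμFIoc : μF (Set.Ioc x b) = ENNReal.ofReal (W x ^ (k+1) / (k+1)) := by
    rw [hμF, StieltjesFunction.measure_Ioc, hFstieq, hFstieq, hF]
    simp only
    rw [hWb]
    norm_num
    rw [neg_div, neg_neg]
  have hle : (∫⁻ t in Set.Ioc x b, μF.rnDeriv volume t).toReal ≤ (μF (Set.Ioc x b)).toReal := by
    apply ENNReal.toReal_mono
    · rw [hμFIoc]; exact ENNReal.ofReal_ne_top
    · exact Measure.setLIntegral_rnDeriv_le _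
  rw [intervalIntegral.integral_of_le hx]
  calc ∫ t in Set.Ioc x b, g t * W t ^ k
      = (∫⁻ t in Set.Ioc x b, μF.rnDeriv volume t).toReal := key
    _ ≤ (μF (Set.Ioc x b)).toReal := hle
    _ = W x ^ (k+1) / (k+1) := by
        rw [hμFIoc, ENNReal.toReal_ofReal (div_nonneg (pow_nonneg (hW0 x) _) hk1.le)]

lemma mul_contOn_intervalIntegrable {g : ℝ → ℝ} (hgm : Measurable g) (hgi : Integrable g)
    {ψ : ℝ → ℝ} (x y : ℝ) (hψ : ContinuousOn ψ (Set.uIcc x y)) :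
    IntervalIntegrable (fun t => g t * ψ t) volume x y := by
  rw [intervalIntegrable_iff]
  obtain ⟨C, hC⟩ := isCompact_uIcc.exists_bound_of_continuousOn hψ
  apply Integrable.mono' ((hgi.norm.mul_const C).integrableOn (s := Set.uIoc x y))
  · exact hgm.aestronglyMeasurable.restrict.mul
      ((hψ.mono Set.uIoc_subset_uIcc).aestronglyMeasurable measurableSet_uIoc)
  · refine (ae_restrict_iff' measurableSet_uIoc).2 (ae_of_all _ fun t ht => ?_)
    rw [norm_mul]
    have h0 : (0:ℝ) ≤ C := le_trans (norm_nonneg _) (hC t (Set.uIoc_subset_uIcc ht))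
    exact mul_le_mul_of_nonneg_left (hC t (Set.uIoc_subset_uIcc ht)) (norm_nonneg _) |>.trans (le_refl _)


/-- Grönwall-type estimate for the Volterra integral inequality. -/
lemma gronwall_aux {g : ℝ → ℝ} {a b : ℝ} (hab : a ≤ b) (hgm : Measurable g) (hgi : Integrable g)
    (hg0 : ∀ t, 0 ≤ g t) (hsupp : ∀ t, b < t → g t = 0)
    {u : ℝ → ℝ} (hu : ContinuousOn u (Set.Icc a b)) (hu0 : ∀ t, 0 ≤ u t)
    {c : ℝ} (hc : 0 ≤ c)
    (h : ∀ x ∈ Set.Icc a b, u x ≤ 1 + c * ∫ t in x..b, g t * u t) :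
    ∀ x ∈ Set.Icc a b, u x ≤ Real.exp (c * ∫ t in x..b, g t) := by
  have hint : ∀ c d : ℝ, IntervalIntegrable g volume c d := fun c d => hgi.intervalIntegrable
  set W : ℝ → ℝ := fun t => ∫ s in t..b, g s with hW
  have hWdiff : ∀ v w : ℝ, W v - W w = ∫ s in v..w, g s := by
    intro v w
    rw [hW]; simp only
    rw [← intervalIntegral.integral_add_adjacent_intervals (hint v w) (hint w b)]
    ring
  have hWanti : Antitone W := fun v w hvw => by
    have h1 := hWdiff v w
    have h2 : 0 ≤ ∫ s in v..w, g s := intervalIntegral.integral_nonneg hvw (fun t _ => hg0 t)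
    linarith
  have hWcont : Continuous W := by
    have hG : Continuous (fun t => ∫ s in (0:ℝ)..t, g s) :=
      intervalIntegral.continuous_primitive hint 0
    have : ∀ t, W t = (∫ s in (0:ℝ)..b, g s) - ∫ s in (0:ℝ)..t, g s := by
      intro t
      rw [hW]; simp only
      rw [← intervalIntegral.integral_add_adjacent_intervals (hint 0 t) (hint t b)]
      ring
    simp only [funext this]
    exact continuous_const.sub hG
  have hW0 : ∀ t, t ≤ b → 0 ≤ W t := fun t ht =>
    intervalIntegral.integral_nonneg ht (fun s _ => hg0 s)
  -- maximum of u on [a,b]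
  obtain ⟨z, hz, hzmax⟩ := isCompact_Icc.exists_isMaxOn (Set.nonempty_Icc.2 hab) hu
  set M := u z with hM
  have hM0 : 0 ≤ M := hu0 z
  have hMle : ∀ y ∈ Set.Icc a b, u y ≤ M := fun y hy => hzmax hy
  -- integrability of g * u on subintervals
  have huint : ∀ x ∈ Set.Icc a b, IntervalIntegrable (fun t => g t * u t) volume x b := by
    intro x hx
    apply mul_contOn_intervalIntegrable hgm hgi
    apply hu.mono
    rw [Set.uIcc_of_le hx.2]
    exact Set.Icc_subset_Icc hx.1 le_rfl
  -- the main induction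
  have claim : ∀ n : ℕ, ∀ x ∈ Set.Icc a b,
      u x ≤ (∑ j ∈ Finset.range n, (c * W x) ^ j / (Nat.factorial j)) +
        M * ((c * W x) ^ n / (Nat.factorial n)) := by
    intro n
    induction n with
    | zero => intro x hx; simpa using hMle x hx
    | succ n ih =>
      intro x hx
      set φ : ℝ → ℝ := fun t =>
        (∑ j ∈ Finset.range n, (c * W t) ^ j / (Nat.factorial j)) +
          M * ((c * W t) ^ n / (Nat.factorial n)) with hφ
      have hφcont : Continuous φ := by
        apply Continuous.add
        · exact continuous_finset_sum _ fun j _ => (((continuous_const.mul hWcont).pow j).div_const _)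
        · exact continuous_const.mul (((continuous_const.mul hWcont).pow n).div_const _)
      have hstep1 : u x ≤ 1 + c * ∫ t in x..b, g t * u t := h x hx
      have hmono : (∫ t in x..b, g t * u t) ≤ ∫ t in x..b, g t * φ t := by
        apply intervalIntegral.integral_mono_on hx.2 (huint x hx)
          (mul_contOn_intervalIntegrable hgm hgi x b (hφcont.continuousOn))
        intro t ht
        have ht' : t ∈ Set.Icc a b := ⟨le_trans hx.1 ht.1, ht.2⟩
        exact mul_le_mul_of_nonneg_left (ih t ht') (hg0 t)
      -- expand the integral of g * φ
      have hIj : ∀ j : ℕ, IntervalIntegrable (fun t => g t * W t ^ j) volume x b :=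
        fun j => mul_contOn_intervalIntegrable hgm hgi x b ((hWcont.pow j).continuousOn)
      have hsumInt : IntervalIntegrable (fun t => ∑ j ∈ Finset.range n,
          c ^ j / (Nat.factorial j) * (g t * W t ^ j)) volume x b := by
        have := IntervalIntegrable.sum (Finset.range n)
          (f := fun j => fun t => c ^ j / (Nat.factorial j) * (g t * W t ^ j))
          (fun j _ => (hIj j).const_mul _)
        simpa only [Finset.sum_fn] using this
      have hexp : (∫ t in x..b, g t * φ t)
          = (∑ j ∈ Finset.range n, (c ^ j / (Nat.factorial j)) * ∫ t in x..b, g t * W t ^ j)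
            + (M * c ^ n / (Nat.factorial n)) * ∫ t in x..b, g t * W t ^ n := by
        have hre : ∀ t, g t * φ t
            = (∑ j ∈ Finset.range n, (c ^ j / (Nat.factorial j)) * (g t * W t ^ j))
              + (M * c ^ n / (Nat.factorial n)) * (g t * W t ^ n) := by
          intro t
          rw [hφ]; simp only
          rw [mul_add, Finset.mul_sum]
          congr 1
          · exact Finset.sum_congr rfl fun j _ => by rw [mul_pow]; ring
          · rw [mul_pow]; ring
        rw [intervalIntegral.integral_congr (fun t _ => hre t)]
        rw [intervalIntegral.integral_add hsumInt ((hIj n).const_mul _),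
          intervalIntegral.integral_finset_sum (fun j _ => (hIj j).const_mul _)]
        congr 1
        · exact Finset.sum_congr rfl fun j _ => intervalIntegral.integral_const_mul _ _
        · exact intervalIntegral.integral_const_mul _ _
      have hkey : ∀ j : ℕ, (∫ t in x..b, g t * W t ^ j) ≤ W x ^ (j+1) / (j+1) :=
        fun j => integral_mul_pow_le hgm hgi hg0 hsupp j hx.2
      have hsum_bound : (∫ t in x..b, g t * φ t)
          ≤ (∑ j ∈ Finset.range n, (c ^ j / (Nat.factorial j)) * (W x ^ (j+1) / ((j:ℝ)+1)))
            + (M * c ^ n / (Nat.factorial n)) * (W x ^ (n+1) / ((n:ℝ)+1)) := by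
        rw [hexp]
        apply add_le_add
        · apply Finset.sum_le_sum
          intro j _
          exact mul_le_mul_of_nonneg_left (hkey j)
            (div_nonneg (pow_nonneg hc j) (Nat.cast_nonneg _))
        · exact mul_le_mul_of_nonneg_left (hkey n)
            (div_nonneg (mul_nonneg hM0 (pow_nonneg hc n)) (Nat.cast_nonneg _))
      have hterm : ∀ j : ℕ, c * (c ^ j / (Nat.factorial j) * (W x ^ (j+1) / ((j:ℝ)+1)))
          = (c * W x) ^ (j+1) / (Nat.factorial (j+1)) := by
        intro j
        have h1 : ((Nat.factorial j : ℝ)) ≠ 0 := Nat.cast_ne_zero.2 (Nat.factorial_ne_zero j)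
        have h2 : ((j:ℝ) + 1) ≠ 0 := by positivity
        rw [Nat.factorial_succ, mul_pow]
        push_cast
        field_simp
        ring
      have htermM : c * (M * c ^ n / (Nat.factorial n) * (W x ^ (n+1) / ((n:ℝ)+1)))
          = M * ((c * W x) ^ (n+1) / (Nat.factorial (n+1))) := by
        have h1 : ((Nat.factorial n : ℝ)) ≠ 0 := Nat.cast_ne_zero.2 (Nat.factorial_ne_zero n)
        have h2 : ((n:ℝ) + 1) ≠ 0 := by positivity
        rw [Nat.factorial_succ, mul_pow]
        push_cast
        field_simp
        ring
      have halg : 1 + c * ((∑ j ∈ Finset.range n, (c ^ j / (Nat.factorial j)) * (W x ^ (j+1) / ((j:ℝ)+1)))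
            + (M * c ^ n / (Nat.factorial n)) * (W x ^ (n+1) / ((n:ℝ)+1)))
          = (∑ j ∈ Finset.range (n+1), (c * W x) ^ j / (Nat.factorial j)) +
            M * ((c * W x) ^ (n+1) / (Nat.factorial (n+1))) := by
        rw [Finset.sum_range_succ' (fun j => (c * W x) ^ j / (Nat.factorial j)) n]
        simp only [pow_zero, Nat.factorial_zero, Nat.cast_one, div_one]
        rw [mul_add, Finset.mul_sum, htermM,
          Finset.sum_congr rfl (fun j _ => hterm j)]
        ring
      calc u x ≤ 1 + c * ∫ t in x..b, g t * u t := hstep1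
        _ ≤ 1 + c * ∫ t in x..b, g t * φ t := by
            have := mul_le_mul_of_nonneg_left hmono hc; linarith
        _ ≤ 1 + c * ((∑ j ∈ Finset.range n, (c ^ j / (Nat.factorial j)) * (W x ^ (j+1) / ((j:ℝ)+1)))
            + (M * c ^ n / (Nat.factorial n)) * (W x ^ (n+1) / ((n:ℝ)+1))) := by
            have := mul_le_mul_of_nonneg_left hsum_bound hc; linarith
        _ = _ := halg
  -- pass to the limit
  intro x hx
  have htend : Tendsto (fun n : ℕ => (∑ j ∈ Finset.range n, (c * W x) ^ j / (Nat.factorial j)) +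
      M * ((c * W x) ^ n / (Nat.factorial n))) atTop (nhds (Real.exp (c * W x) + M * 0)) := by
    apply Tendsto.add
    · have := (NormedSpace.expSeries_div_hasSum_exp (c * W x)).tendsto_sum_nat
      rwa [← Real.exp_eq_exp_ℝ] at this
    · exact (FloorSemiring.tendsto_pow_div_factorial_atTop (c * W x)).const_mul M
  have := ge_of_tendsto' htend (fun n => claim n x hx)
  simpa using this

lemma abs_exp_sub_one_le_of_re_nonpos {z : ℂ} (hz : z.re ≤ 0) :
    ‖Complex.exp z - 1‖ ≤ ‖z‖ := by
  have hder : ∀ t : ℝ, HasDerivAt (fun s : ℝ => Complex.exp (s * z)) (z * Complex.exp (t * z)) t := by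
    intro t
    have h1 : HasDerivAt (fun w : ℂ => Complex.exp (w * z)) (Complex.exp ((t:ℂ) * z) * z) (t:ℂ) := by
      have := (Complex.hasDerivAt_exp ((t:ℂ)*z)).comp (t:ℂ) ((hasDerivAt_id (t:ℂ)).mul_const z)
      rw [one_mul] at this
      exact this
    have := h1.comp_ofReal
    simpa [mul_comm] using this
  have heq : Complex.exp z - 1 = ∫ t in (0:ℝ)..1, z * Complex.exp (t * z) := by
    rw [intervalIntegral.integral_eq_sub_of_hasDerivAt (fun t _ => hder t)
      (Continuous.intervalIntegrable (by fun_prop) _ _)]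
    simp
  rw [heq]
  have hbd : ∀ t ∈ Set.uIoc (0:ℝ) 1, ‖z * Complex.exp (t * z)‖ ≤ ‖z‖ := by
    intro t ht
    rw [Set.uIoc_of_le zero_le_one] at ht
    rw [norm_mul]
    have h2 : ‖Complex.exp ((t:ℂ) * z)‖ ≤ 1 := by
      rw [Complex.norm_exp, Real.exp_le_one_iff]
      have : ((t:ℂ) * z).re = t * z.re := by simp [Complex.mul_re]
      rw [this]
      exact mul_nonpos_of_nonneg_of_nonpos ht.1.le hz
    calc ‖z‖ * ‖Complex.exp ((t:ℂ) * z)‖ ≤ ‖z‖ * 1 :=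
          mul_le_mul_of_nonneg_left h2 (norm_nonneg _)
      _ = ‖z‖ := by rw [mul_one]
  have := intervalIntegral.norm_integral_le_of_norm_le_const hbd
  simpa using this

lemma kappa_bounds {ζ : ℂ} (hζ : 0 ≤ ζ.im) (hne : ζ ≠ 0) {s : ℝ} (hs : 0 ≤ s) :
    ‖kappa ζ s‖ ≤ 1 / ‖ζ‖ ∧ ‖kappa ζ s‖ ≤ s := by
  rw [kappa, if_neg hne]
  set z : ℂ := 2 * Complex.I * ζ * s with hz
  have hre : z.re ≤ 0 := by
    have : z.re = -(2 * ζ.im * s) := by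
      rw [hz]
      simp [Complex.mul_re, Complex.mul_im]
    rw [this]
    have := mul_nonneg (mul_nonneg (by norm_num : (0:ℝ) ≤ 2) hζ) hs
    linarith
  have habsz : ‖z‖ = 2 * ‖ζ‖ * s := by
    rw [hz]
    simp [norm_mul, abs_of_nonneg hs]
  have habsd : ‖2 * Complex.I * ζ‖ = 2 * ‖ζ‖ := by
    simp [norm_mul]
  have hd0 : (0:ℝ) < 2 * ‖ζ‖ := by
    have := norm_pos_iff.2 hne
    linarith
  rw [norm_div, habsd]
  constructor
  · have h2 : ‖Complex.exp z - 1‖ ≤ 2 := by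
      calc ‖Complex.exp z - 1‖ ≤ ‖Complex.exp z‖ + 1 := by
            have := norm_sub_le (Complex.exp z) 1
            simpa using this
        _ ≤ 1 + 1 := by
            have : ‖Complex.exp z‖ = Real.exp z.re := Complex.norm_exp z
            rw [this]
            have := Real.exp_le_one_iff.2 hre
            linarith
        _ = 2 := by norm_num
    rw [div_le_div_iff₀ hd0 (norm_pos_iff.2 hne), one_mul]
    calc ‖Complex.exp z - 1‖ * ‖ζ‖ ≤ 2 * ‖ζ‖ :=
          mul_le_mul_of_nonneg_right h2 (norm_nonneg _)
      _ ≤ 2 * ‖ζ‖ := le_rfl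
  · rw [div_le_iff₀ hd0]
    calc ‖Complex.exp z - 1‖ ≤ ‖z‖ := abs_exp_sub_one_le_of_re_nonpos hre
      _ = s * (2 * ‖ζ‖) := by rw [habsz]; ring

/-- For every `ζ ≠ 0` in the closed upper half-plane the
solution `b(·,ζ)` of the Jost integral equation satisfies
`|b(a,ζ) − 1| ≤ (‖V‖₁/|ζ|) exp((b−a)‖V‖₁)`; in particular `b(a,ζ) → 1` as
`|ζ| → ∞` within the closed upper half-plane. -/
theorem statement8
    (a b : ℝ) (hab : a < b)
    (V : ℝ → ℝ) (hV : Integrable V)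
    (hVsupp : ∀ x, x ∉ Set.Icc a b → V x = 0)
    (B : ℝ → ℂ → ℂ)
    (hBcont : ∀ ζ : ℂ, 0 ≤ ζ.im → ContinuousOn (fun x => B x ζ) (Set.Iic b))
    (hBeq : ∀ ζ : ℂ, 0 ≤ ζ.im → ∀ x ≤ b,
      B x ζ = 1 + ∫ t in x..b, kappa ζ (t - x) * (V t : ℂ) * B t ζ) :
    (∀ ζ : ℂ, 0 ≤ ζ.im → ζ ≠ 0 →
      ‖B a ζ - 1‖
        ≤ ((∫ t in a..b, |V t|) / ‖ζ‖)
            * Real.exp ((b - a) * ∫ t in a..b, |V t|)) ∧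
    Tendsto (fun ζ => B a ζ)
      (comap (fun ζ : ℂ => ‖ζ‖) atTop ⊓ 𝓟 {ζ : ℂ | 0 ≤ ζ.im}) (nhds 1) := by
  -- measurable version of |V| supported in [a,b]
  set V' : ℝ → ℝ := hV.1.mk V with hV'
  have hV'm : Measurable V' := hV.1.stronglyMeasurable_mk.measurable
  have hV'ae : V =ᵐ[volume] V' := hV.1.ae_eq_mk
  set g : ℝ → ℝ := (Set.Icc a b).indicator (fun t => |V' t|) with hg
  have hgm : Measurable g := (hV'm.abs).indicator measurableSet_Icc
  have hg0 : ∀ t, 0 ≤ g t := by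
    intro t
    rw [hg]
    by_cases ht : t ∈ Set.Icc a b <;> simp [Set.indicator, ht, abs_nonneg]
  have hgsupp : ∀ t, b < t → g t = 0 := by
    intro t ht
    rw [hg]
    apply Set.indicator_of_notMem
    intro hmem
    exact absurd hmem.2 (not_le.2 ht)
  have hgae : (fun t => |V t|) =ᵐ[volume] g := by
    filter_upwards [hV'ae] with t ht
    by_cases hmem : t ∈ Set.Icc a b
    · rw [hg]; simp [Set.indicator, hmem, ht]
    · rw [hg]; simp [Set.indicator, hmem, hVsupp t hmem]
  have hgi : Integrable g := hV.abs.congr hgae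
  have hgint : ∀ c d : ℝ, IntervalIntegrable g volume c d := fun c d => hgi.intervalIntegrable
  set W : ℝ → ℝ := fun t => ∫ s in t..b, g s with hW
  have hNW : (∫ t in a..b, |V t|) = W a := by
    rw [hW]
    exact intervalIntegral.integral_congr_ae ((hgae.mono fun t ht => fun _ => ht))
  have hWa0 : 0 ≤ W a := intervalIntegral.integral_nonneg hab.le fun t _ => hg0 t
  set E : ℝ := Real.exp ((b - a) * W a) with hE
  have hE0 : (0:ℝ) < E := Real.exp_pos _
  -- the per-ζ bound
  have main : ∀ ζ : ℂ, 0 ≤ ζ.im → ζ ≠ 0 →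
      ‖B a ζ - 1‖ ≤ (W a / ‖ζ‖) * E := by
    intro ζ him hne
    set u : ℝ → ℝ := fun t => ‖B t ζ‖ with hu
    have hucont : ContinuousOn u (Set.Icc a b) :=
      continuous_norm.comp_continuousOn
        ((hBcont ζ him).mono Set.Icc_subset_Iic_self)
    have hu0 : ∀ t, 0 ≤ u t := fun t => norm_nonneg _
    -- the Grönwall hypothesis
    have hghyp : ∀ x ∈ Set.Icc a b, u x ≤ 1 + (b - a) * ∫ t in x..b, g t * u t := by
      intro x hx
      have heq := hBeq ζ him x hx.2
      have hucont' : ContinuousOn u (Set.uIcc x b) := by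
        apply hucont.mono
        rw [Set.uIcc_of_le hx.2]
        exact Set.Icc_subset_Icc hx.1 le_rfl
      have hbd : ‖∫ t in x..b, kappa ζ (t - x) * (V t : ℂ) * B t ζ‖
          ≤ |∫ t in x..b, (b - a) * (g t * u t)| := by
        apply intervalIntegral.norm_integral_le_abs_of_norm_le
        · filter_upwards [ae_restrict_of_ae hgae, ae_restrict_mem measurableSet_uIoc]
            with t ht htmem
          rw [Set.uIoc_of_le hx.2] at htmem
          have hts : 0 ≤ t - x := by linarith [htmem.1.le]
          have htba : t - x ≤ b - a := by
            have := htmem.2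
            have := hx.1
            linarith
          have hk := (kappa_bounds him hne hts).2
          calc ‖kappa ζ (t - x) * (V t : ℂ) * B t ζ‖
              = ‖kappa ζ (t - x)‖ * |V t| * u t := by
                rw [norm_mul, norm_mul]
                simp [hu]
            _ ≤ (b - a) * |V t| * u t := by
                apply mul_le_mul_of_nonneg_right _ (hu0 t)
                exact mul_le_mul_of_nonneg_right (hk.trans htba) (abs_nonneg _)
            _ = (b - a) * (g t * u t) := by rw [ht]; ring
        · exact (mul_contOn_intervalIntegrable hgm hgi x b hucont').const_mul _
      have hnn : 0 ≤ ∫ t in x..b, (b - a) * (g t * u t) := by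
        apply intervalIntegral.integral_nonneg hx.2
        intro t _
        exact mul_nonneg (by linarith) (mul_nonneg (hg0 t) (hu0 t))
      rw [abs_of_nonneg hnn, intervalIntegral.integral_const_mul] at hbd
      calc u x = ‖1 + ∫ t in x..b, kappa ζ (t - x) * (V t : ℂ) * B t ζ‖ := by
            rw [hu]; simp only; rw [heq]
        _ ≤ ‖(1:ℂ)‖ + ‖∫ t in x..b, kappa ζ (t - x) * (V t : ℂ) * B t ζ‖ := by
            have := norm_add_le (1:ℂ) (∫ t in x..b, kappa ζ (t - x) * (V t : ℂ) * B t ζ)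
            simpa using this
        _ ≤ 1 + (b - a) * ∫ t in x..b, g t * u t := by
            simp only [norm_one]
            linarith
    have hgron := gronwall_aux hab.le hgm hgi hg0 hgsupp hucont hu0
      (by linarith : (0:ℝ) ≤ b - a) hghyp
    -- uniform bound on u over [a,b]
    have huE : ∀ t ∈ Set.Icc a b, u t ≤ E := by
      intro t ht
      have h1 := hgron t ht
      have h2 : W t ≤ W a := by
        have hda : W a - W t = ∫ s in a..t, g s := by
          rw [hW]; simp only
          rw [← intervalIntegral.integral_add_adjacent_intervals (hgint a t) (hgint t b)]
          ring
        have h3 : 0 ≤ ∫ s in a..t, g s :=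
          intervalIntegral.integral_nonneg ht.1 fun s _ => hg0 s
        linarith
      calc u t ≤ Real.exp ((b - a) * W t) := h1
        _ ≤ E := by
            rw [hE]
            apply Real.exp_le_exp.2
            apply mul_le_mul_of_nonneg_left h2 (by linarith)
    -- final estimate at x = a
    have heqa := hBeq ζ him a hab.le
    have hBa : B a ζ - 1 = ∫ t in a..b, kappa ζ (t - a) * (V t : ℂ) * B t ζ := by
      rw [heqa]; ring
    have hbd2 : ‖∫ t in a..b, kappa ζ (t - a) * (V t : ℂ) * B t ζ‖
        ≤ |∫ t in a..b, (E / ‖ζ‖) * g t| := by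
      apply intervalIntegral.norm_integral_le_abs_of_norm_le
      · filter_upwards [ae_restrict_of_ae hgae, ae_restrict_mem measurableSet_uIoc]
          with t ht htmem
        rw [Set.uIoc_of_le hab.le] at htmem
        have hts : 0 ≤ t - a := by linarith [htmem.1.le]
        have hk := (kappa_bounds him hne hts).1
        have htIcc : t ∈ Set.Icc a b := ⟨htmem.1.le, htmem.2⟩
        calc ‖kappa ζ (t - a) * (V t : ℂ) * B t ζ‖
            = ‖kappa ζ (t - a)‖ * |V t| * u t := by
              rw [norm_mul, norm_mul]
              simp [hu]
          _ ≤ (1 / ‖ζ‖) * |V t| * E := by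
              apply mul_le_mul (mul_le_mul_of_nonneg_right hk (abs_nonneg _))
                (huE t htIcc) (hu0 t)
              positivity
          _ = (E / ‖ζ‖) * g t := by rw [ht]; ring
      · exact (hgint a b).const_mul _
    have hnn2 : 0 ≤ ∫ t in a..b, (E / ‖ζ‖) * g t := by
      apply intervalIntegral.integral_nonneg hab.le
      intro t _
      exact mul_nonneg (by positivity) (hg0 t)
    rw [abs_of_nonneg hnn2, intervalIntegral.integral_const_mul] at hbd2
    rw [hBa]
    calc ‖∫ t in a..b, kappa ζ (t - a) * (V t : ℂ) * B t ζ‖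
        ≤ (E / ‖ζ‖) * W a := hbd2
      _ = (W a / ‖ζ‖) * E := by ring
  constructor
  · intro ζ him hne
    rw [hNW]
    exact main ζ him hne
  · set F := comap (fun ζ : ℂ => ‖ζ‖) atTop ⊓ 𝓟 {ζ : ℂ | 0 ≤ ζ.im} with hF
    have habsT : Tendsto (fun ζ : ℂ => ‖ζ‖) F atTop := tendsto_comap.mono_left inf_le_left
    have him : ∀ᶠ ζ : ℂ in F, 0 ≤ ζ.im := by
      have h1 : F ≤ 𝓟 {ζ : ℂ | 0 ≤ ζ.im} := inf_le_right
      exact h1 (eventually_principal.2 fun ζ hζ => hζ)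
    have hone : ∀ᶠ ζ : ℂ in F, 1 ≤ ‖ζ‖ := habsT.eventually_ge_atTop 1
    rw [tendsto_iff_dist_tendsto_zero]
    have hdiv : Tendsto (fun ζ : ℂ => (W a * E) / ‖ζ‖) F (nhds 0) :=
      Tendsto.div_atTop (show Tendsto (fun _ : ℂ => W a * E) F (nhds (W a * E)) from tendsto_const_nhds) habsT
    refine squeeze_zero' (Eventually.of_forall fun ζ => dist_nonneg) ?_ hdiv
    filter_upwards [him, hone] with ζ h1 h2
    have hne : ζ ≠ 0 := by
      intro h
      rw [h, norm_zero] at h2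
      linarith
    have hm := main ζ h1 hne
    rw [Complex.dist_eq]
    calc ‖B a ζ - 1‖ ≤ (W a / ‖ζ‖) * E := hm
      _ = (W a * E) / ‖ζ‖ := by ring
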